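/- Let g ∈ Σ be least in the precedence (f ≿ g for every f ∈ Σ) with σ(g) = [] (empty status). If x ⊵_A t where t = g(t1,...,tm), then s ≥_WPO t{x ↦ s} for every non-variable term s = f(s1,...,sn). -/

import Mathlib

/-- First-order terms over a signature `F` with arity function `ar`
and variables from `V`. -/
inductive Trm (F : Type) (ar : F → ℕ) (V : Type) : Type where
  | var : V → Trm F ar V
  | fn  : (f : F) → (Fin (ar f) → Trm F ar V) → Trm F ar V

variable {F V : Type} {ar : F → ℕ}

/-- Application of a substitution to a term. -/
def Trm.subst (θ : V → Trm F ar V) : Trm F ar V → Trm F ar V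
  | .var x => θ x
  | .fn f ss => .fn f fun i => (ss i).subst θ

/-- Strict part of a quasi-precedence. -/
def precGT (prec : F → F → Prop) (f g : F) : Prop := prec f g ∧ ¬ prec g f
/-- Equivalence part of a quasi-precedence. -/
def precEQ (prec : F → F → Prop) (f g : F) : Prop := prec f g ∧ prec g f

/-- Strict lexicographic extension of (GE, GT) to lists. -/
inductive LexGT {α : Type} (GE GT : α → α → Prop) : List α → List α → Prop
  | cons_nil {a l} : LexGT GE GT (a :: l) []
  | head {a b l m} : GT a b → LexGT GE GT (a :: l) (b :: m)
  | tail {a b l m} : GE a b → LexGT GE GT l m → LexGT GE GT (a :: l) (b :: m)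

/-- Weak lexicographic extension of (GE, GT) to lists. -/
inductive LexGE {α : Type} (GE GT : α → α → Prop) : List α → List α → Prop
  | nil {l} : LexGE GE GT l []
  | head {a b l m} : GT a b → LexGE GE GT (a :: l) (b :: m)
  | tail {a b l m} : GE a b → LexGE GE GT l m → LexGE GE GT (a :: l) (b :: m)

/-- The case analysis of the WPO definition, parameterized by the
lexicographic extension used (strict or weak). -/
def WPOCases (AGS AGT : Trm F ar V → Trm F ar V → Prop) (prec : F → F → Prop)
    (σ : ∀ f : F, List (Fin (ar f)))
    (GE GT : Trm F ar V → Trm F ar V → Prop)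
    (lex : List (Trm F ar V) → List (Trm F ar V) → Prop)
    (f : F) (ss : Fin (ar f) → Trm F ar V) (t : Trm F ar V) : Prop :=
  AGT (.fn f ss) t ∨
    (AGS (.fn f ss) t ∧
      ((∃ i ∈ σ f, GE (ss i) t) ∨
       (∃ g ts, t = Trm.fn g ts ∧ (∀ j ∈ σ g, GT (.fn f ss) (ts j)) ∧
         (precGT prec f g ∨ (precEQ prec f g ∧ lex ((σ f).map ss) ((σ g).map ts))))))

/-- The pair of relations (GE, GT) satisfies the defining equations of
the weighted path order, over term-level algebra orders AGS (weak) and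
AGT (strict), quasi-precedence `prec`, and (partial) status `σ`. -/
structure IsWPO (AGS AGT : Trm F ar V → Trm F ar V → Prop) (prec : F → F → Prop)
    (σ : ∀ f : F, List (Fin (ar f)))
    (GE GT : Trm F ar V → Trm F ar V → Prop) : Prop where
  ge_var : ∀ (x : V) (t : Trm F ar V), GE (.var x) t ↔ t = .var x
  gt_var : ∀ (x : V) (t : Trm F ar V), ¬ GT (.var x) t
  gt_fn : ∀ (f : F) (ss : Fin (ar f) → Trm F ar V) (t : Trm F ar V),
    GT (.fn f ss) t ↔ WPOCases AGS AGT prec σ GE GT (LexGT GE GT) f ss t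
  ge_fn : ∀ (f : F) (ss : Fin (ar f) → Trm F ar V) (t : Trm F ar V),
    GE (.fn f ss) t ↔ WPOCases AGS AGT prec σ GE GT (LexGE GE GT) f ss t

/-- A status is total iff each `σ f` is a permutation of all argument
positions of `f`. -/
def TotalStatus (σ : ∀ f : F, List (Fin (ar f))) : Prop :=
  ∀ f : F, (σ f).Perm (List.finRange (ar f))

/-- Let `g` be least in the precedence with empty status.  If
`x ⊵_A t` where `t = g(t1,...,tm)`, then `s ≥_WPO t{x ↦ s}` for every
non-variable term `s = f(s1,...,sn)`. -/
theorem wpo_least_refinement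
    {F V : Type} {ar : F → ℕ} [DecidableEq V]
    (AGS AGT : Trm F ar V → Trm F ar V → Prop) (prec : F → F → Prop)
    (σ : ∀ f : F, List (Fin (ar f)))
    (GE GT : Trm F ar V → Trm F ar V → Prop)
    (hW : IsWPO AGS AGT prec σ GE GT)
    (hAGS_stable : ∀ (s t : Trm F ar V) (θ : V → Trm F ar V),
        AGS s t → AGS (s.subst θ) (t.subst θ))
    (g : F) (hleast : ∀ f : F, prec f g) (hg : σ g = [])
    (x : V) (ts : Fin (ar g) → Trm F ar V)
    (hxt : AGS (.var x) (.fn g ts))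
    (f : F) (ss : Fin (ar f) → Trm F ar V) :
    GE (.fn f ss)
      ((Trm.fn g ts).subst fun v => if v = x then .fn f ss else .var v) := by
  set θ : V → Trm F ar V := fun v => if v = x then .fn f ss else .var v with hθ
  have hsub : AGS ((Trm.var x).subst θ) ((Trm.fn g ts).subst θ) :=
    hAGS_stable _ _ θ hxt
  have hvx : (Trm.var x).subst θ = Trm.fn f ss := by simp [Trm.subst, hθ]
  rw [hvx] at hsub
  rw [hW.ge_fn]
  refine Or.inr ⟨by simpa [Trm.subst] using hsub, Or.inr ⟨g, _, rfl, ?_, ?_⟩⟩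
  · intro j hj; rw [hg] at hj; exact (List.not_mem_nil hj).elim
  · by_cases hgf : prec g f
    · exact Or.inr ⟨⟨hleast f, hgf⟩, by rw [hg]; exact LexGE.nil⟩
    · exact Or.inl ⟨hleast f, hgf⟩
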